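/- Let M = [[A, B],[B^T, C]] be a symmetric positive semidefinite block matrix. Then rank M = rank C + rank (A - B C^† B^T). -/

import Mathlib

open Matrix

open scoped Classical

/-- Moore–Penrose pseudoinverse of a real matrix, defined via the four Penrose
conditions (which determine it uniquely when it exists). -/
noncomputable def pinv {n m : ℕ} (A : Matrix (Fin n) (Fin m) ℝ) : Matrix (Fin m) (Fin n) ℝ :=
  if h : ∃ X : Matrix (Fin m) (Fin n) ℝ,
      A * X * A = A ∧ X * A * X = X ∧ (A * X)ᵀ = A * X ∧ (X * A)ᵀ = X * A
  then h.choose else 0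

lemma penrose_exists {m : ℕ} {C : Matrix (Fin m) (Fin m) ℝ} (hC : C.IsHermitian) :
    ∃ X : Matrix (Fin m) (Fin m) ℝ,
      (C * X * C = C ∧ X * C * X = X ∧ (C * X)ᵀ = C * X ∧ (X * C)ᵀ = X * C) ∧ Xᵀ = X := by
  set U : Matrix (Fin m) (Fin m) ℝ := (hC.eigenvectorUnitary : Matrix (Fin m) (Fin m) ℝ) with hU
  have hU1 : star U * U = 1 := by
    exact Unitary.coe_star_mul_self (hC.eigenvectorUnitary)
  set d : Fin m → ℝ := RCLike.ofReal ∘ hC.eigenvalues with hd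
  set Φ : (Fin m → ℝ) → Matrix (Fin m) (Fin m) ℝ := fun f => U * diagonal f * star U with hΦ
  have hmul : ∀ f g, Φ f * Φ g = Φ (f * g) := by
    intro f g
    simp only [hΦ]
    rw [Matrix.mul_assoc, Matrix.mul_assoc, ← Matrix.mul_assoc (star U) (U * diagonal g),
      ← Matrix.mul_assoc (star U) U, hU1, Matrix.one_mul,
      ← Matrix.mul_assoc, ← Matrix.mul_assoc, Matrix.mul_assoc U (diagonal f) (diagonal g),
      diagonal_mul_diagonal]
    rfl
  have ht : ∀ f, (Φ f)ᵀ = Φ f := by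
    intro f
    rw [← conjTranspose_eq_transpose_of_trivial]
    simp only [hΦ, conjTranspose_mul, diagonal_conjTranspose, Matrix.mul_assoc, star_trivial]
    rw [Matrix.star_eq_conjTranspose U, conjTranspose_conjTranspose]
  have hidem : d * d⁻¹ * d = d := by
    funext i
    simp only [Pi.mul_apply, Pi.inv_apply]
    rcases eq_or_ne (d i) 0 with h | h
    · simp [h]
    · field_simp
  have hidem2 : d⁻¹ * d * d⁻¹ = d⁻¹ := by
    funext i
    simp only [Pi.mul_apply, Pi.inv_apply]
    rcases eq_or_ne (d i) 0 with h | h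
    · simp [h]
    · field_simp
  have hCΦ : C = Φ d := hC.spectral_theorem
  refine ⟨Φ d⁻¹, ⟨?_, ?_, ?_, ?_⟩, ht _⟩
  · rw [hCΦ, hmul, hmul, hidem]
  · rw [hCΦ, hmul, hmul, hidem2]
  · rw [hCΦ, hmul]; exact ht _
  · rw [hCΦ, hmul]; exact ht _

lemma penrose_unique {n m : ℕ} (A : Matrix (Fin n) (Fin m) ℝ) (X Y : Matrix (Fin m) (Fin n) ℝ)
    (hX : A * X * A = A ∧ X * A * X = X ∧ (A * X)ᵀ = A * X ∧ (X * A)ᵀ = X * A)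
    (hY : A * Y * A = A ∧ Y * A * Y = Y ∧ (A * Y)ᵀ = A * Y ∧ (Y * A)ᵀ = Y * A) : X = Y := by
  obtain ⟨hX1, hX2, hX3, hX4⟩ := hX
  obtain ⟨hY1, hY2, hY3, hY4⟩ := hY
  have hX1' : A * (X * A) = A := by rw [← Matrix.mul_assoc]; exact hX1
  have hY1' : A * (Y * A) = A := by rw [← Matrix.mul_assoc]; exact hY1
  have h1 : X * A = Y * A := by
    calc X * A = (X * A)ᵀ := hX4.symm
      _ = (X * (A * (Y * A)))ᵀ := by rw [hY1']
      _ = ((X * A) * (Y * A))ᵀ := by rw [Matrix.mul_assoc]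
      _ = (Y * A)ᵀ * (X * A)ᵀ := transpose_mul _ _
      _ = (Y * A) * (X * A) := by rw [hX4, hY4]
      _ = Y * (A * (X * A)) := by rw [Matrix.mul_assoc]
      _ = Y * A := by rw [hX1']
  have h2 : A * X = A * Y := by
    calc A * X = (A * X)ᵀ := hX3.symm
      _ = ((A * (Y * A)) * X)ᵀ := by rw [hY1']
      _ = ((A * Y) * (A * X))ᵀ := by
          rw [Matrix.mul_assoc A (Y * A) X, Matrix.mul_assoc Y A X,
            ← Matrix.mul_assoc A Y (A * X)]
      _ = (A * X)ᵀ * (A * Y)ᵀ := transpose_mul _ _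
      _ = (A * X) * (A * Y) := by rw [hX3, hY3]
      _ = A * ((X * A) * Y) := by
          rw [Matrix.mul_assoc A X (A * Y), ← Matrix.mul_assoc X A Y]
      _ = A * (Y * A * Y) := by rw [h1]
      _ = A * Y := by rw [hY2]
  calc X = X * A * X := hX2.symm
    _ = Y * A * X := by rw [h1]
    _ = Y * (A * X) := by rw [Matrix.mul_assoc]
    _ = Y * (A * Y) := by rw [h2]
    _ = Y * A * Y := by rw [Matrix.mul_assoc]
    _ = Y := hY2

lemma pinv_spec {m : ℕ} {C : Matrix (Fin m) (Fin m) ℝ} (hC : Cᵀ = C) :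
    (C * pinv C * C = C ∧ pinv C * C * pinv C = pinv C ∧
      (C * pinv C)ᵀ = C * pinv C ∧ (pinv C * C)ᵀ = pinv C * C) ∧ (pinv C)ᵀ = pinv C := by
  have hC' : C.IsHermitian := by
    rw [Matrix.IsHermitian, conjTranspose_eq_transpose_of_trivial]; exact hC
  obtain ⟨X, hX, hXt⟩ := penrose_exists hC'
  have hex : ∃ X : Matrix (Fin m) (Fin m) ℝ,
      C * X * C = C ∧ X * C * X = X ∧ (C * X)ᵀ = C * X ∧ (X * C)ᵀ = X * C := ⟨X, hX⟩
  have hpinv : pinv C = X := by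
    rw [pinv, dif_pos hex]
    exact penrose_unique C _ X hex.choose_spec hX
  rw [hpinv]
  exact ⟨hX, hXt⟩

lemma ker_contained {n m : ℕ} {A : Matrix (Fin n) (Fin n) ℝ} {B : Matrix (Fin n) (Fin m) ℝ}
    {C : Matrix (Fin m) (Fin m) ℝ} (hM : (Matrix.fromBlocks A B Bᵀ C).PosSemidef)
    (v : Fin m → ℝ) (hv : C *ᵥ v = 0) : B *ᵥ v = 0 := by
  obtain ⟨N, hN⟩ : ∃ N : Matrix (Fin n ⊕ Fin m) (Fin n ⊕ Fin m) ℝ,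
      Matrix.fromBlocks A B Bᵀ C = Nᴴ * N := by
    open scoped MatrixOrder Matrix.Norms.L2Operator in
    exact CStarAlgebra.nonneg_iff_eq_star_mul_self.mp hM.nonneg
  set w : Fin n ⊕ Fin m → ℝ := Sum.elim 0 v with hw
  have hMw : (Matrix.fromBlocks A B Bᵀ C) *ᵥ w = Sum.elim (B *ᵥ v) 0 := by
    rw [fromBlocks_mulVec]
    simp [hw, hv]
  have h0 : dotProduct w ((Matrix.fromBlocks A B Bᵀ C) *ᵥ w) = 0 := by
    rw [hMw]
    simp [dotProduct, Fintype.sum_sum_type, hw]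
  have hNw : N *ᵥ w = 0 := by
    have e : dotProduct w ((Nᴴ * N) *ᵥ w) = dotProduct (N *ᵥ w) (N *ᵥ w) := by
      rw [← mulVec_mulVec, dotProduct_mulVec, conjTranspose_eq_transpose_of_trivial,
        vecMul_transpose]
    have h1 : dotProduct (N *ᵥ w) (N *ᵥ w) = 0 := by rw [← e, ← hN]; exact h0
    exact dotProduct_self_eq_zero.mp h1
  have h2 : (Matrix.fromBlocks A B Bᵀ C) *ᵥ w = 0 := by
    rw [hN, ← mulVec_mulVec, hNw, mulVec_zero]
  rw [hMw] at h2
  funext i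
  exact congrFun h2 (Sum.inl i)

lemma cancel_of_ker {n m : ℕ} {B : Matrix (Fin n) (Fin m) ℝ}
    {C P : Matrix (Fin m) (Fin m) ℝ} (h : ∀ v, C *ᵥ v = 0 → B *ᵥ v = 0)
    (h1 : C * P * C = C) : B * P * C = B := by
  have key : ∀ u : Fin m → ℝ, (B * P * C) *ᵥ u = B *ᵥ u := by
    intro u
    have hker : C *ᵥ ((P * C) *ᵥ u - u) = 0 := by
      rw [mulVec_sub, mulVec_mulVec, ← Matrix.mul_assoc, h1, sub_self]
    have := h _ hker
    rw [mulVec_sub, mulVec_mulVec, sub_eq_zero] at this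
    rw [Matrix.mul_assoc, ← mulVec_mulVec]
    rw [← mulVec_mulVec] at this
    exact this
  ext i j
  have := congrFun (key (Pi.single j 1)) i
  simpa using this

lemma rank_fromBlocks_diag {n m : ℕ} (S : Matrix (Fin n) (Fin n) ℝ)
    (C : Matrix (Fin m) (Fin m) ℝ) :
    (Matrix.fromBlocks S 0 0 C).rank = S.rank + C.rank := by
  classical
  set D := Matrix.fromBlocks S (0 : Matrix (Fin n) (Fin m) ℝ) (0 : Matrix (Fin m) (Fin n) ℝ) C
    with hD
  let e := LinearEquiv.sumArrowLequivProdArrow (Fin n) (Fin m) ℝ ℝ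
  have hcompute : ∀ w : Fin n ⊕ Fin m → ℝ,
      e (D.mulVecLin w) = (S *ᵥ (w ∘ Sum.inl), C *ᵥ (w ∘ Sum.inr)) := by
    intro w
    have : D *ᵥ w = Sum.elim (S *ᵥ (w ∘ Sum.inl)) (C *ᵥ (w ∘ Sum.inr)) := by
      rw [hD, fromBlocks_mulVec]
      simp
    ext x
    · simp [e, mulVecLin_apply, this]
    · simp [e, mulVecLin_apply, this]
  have key : Submodule.map (e : (Fin n ⊕ Fin m → ℝ) →ₗ[ℝ] (Fin n → ℝ) × (Fin m → ℝ))
      (LinearMap.range D.mulVecLin)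
      = (LinearMap.range S.mulVecLin).prod (LinearMap.range C.mulVecLin) := by
    ext x
    simp only [Submodule.mem_map, LinearMap.mem_range, Submodule.mem_prod]
    constructor
    · rintro ⟨y, ⟨w, rfl⟩, rfl⟩
      simp only [LinearEquiv.coe_coe]
      rw [hcompute w]
      exact ⟨⟨w ∘ Sum.inl, rfl⟩, ⟨w ∘ Sum.inr, rfl⟩⟩
    · rintro ⟨⟨a, ha⟩, ⟨b, hb⟩⟩
      refine ⟨D.mulVecLin (Sum.elim a b), ⟨Sum.elim a b, rfl⟩, ?_⟩
      simp only [LinearEquiv.coe_coe]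
      rw [hcompute]
      simp only [Sum.elim_comp_inl, Sum.elim_comp_inr]
      rw [mulVecLin_apply] at ha hb
      rw [ha, hb]
  have h2 : D.rank = Module.finrank ℝ
      ((LinearMap.range S.mulVecLin).prod (LinearMap.range C.mulVecLin)) := by
    rw [Matrix.rank, ← key, LinearEquiv.finrank_map_eq]
  rw [h2]
  have hsup : (LinearMap.range S.mulVecLin).prod (LinearMap.range C.mulVecLin)
      = (Submodule.map (LinearMap.inl ℝ _ _) (LinearMap.range S.mulVecLin)) ⊔
        (Submodule.map (LinearMap.inr ℝ _ _) (LinearMap.range C.mulVecLin)) :=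
    LinearMap.prod_eq_sup_map _ _
  have hdisj : Disjoint (Submodule.map (LinearMap.inl ℝ (Fin n → ℝ) (Fin m → ℝ))
      (LinearMap.range S.mulVecLin))
      (Submodule.map (LinearMap.inr ℝ (Fin n → ℝ) (Fin m → ℝ)) (LinearMap.range C.mulVecLin)) := by
    rw [Submodule.disjoint_def]
    rintro ⟨x1, x2⟩ hx hy
    simp only [Submodule.mem_map, LinearMap.mem_range] at hx hy
    obtain ⟨a, -, ha⟩ := hx
    obtain ⟨b, -, hb⟩ := hy
    have ha2 := congrArg Prod.snd ha
    have hb1 := congrArg Prod.fst hb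
    simp at ha2 hb1
    simp [Prod.ext_iff, ← ha2, ← hb1]
  rw [hsup]
  have hadd := Submodule.finrank_sup_add_finrank_inf_eq
    (Submodule.map (LinearMap.inl ℝ (Fin n → ℝ) (Fin m → ℝ)) (LinearMap.range S.mulVecLin))
    (Submodule.map (LinearMap.inr ℝ (Fin n → ℝ) (Fin m → ℝ)) (LinearMap.range C.mulVecLin))
  rw [hdisj.eq_bot, finrank_bot, add_zero] at hadd
  rw [hadd]
  congr 1
  · exact (Submodule.equivMapOfInjective _ LinearMap.inl_injective
      (LinearMap.range S.mulVecLin)).symm.finrank_eq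
  · exact (Submodule.equivMapOfInjective _ LinearMap.inr_injective
      (LinearMap.range C.mulVecLin)).symm.finrank_eq

/-- For a psd block matrix M = [[A,B],[Bᵀ,C]], rank M = rank C + rank (M/C). -/
theorem stmt3 {n m : ℕ} (A : Matrix (Fin n) (Fin n) ℝ) (B : Matrix (Fin n) (Fin m) ℝ)
    (C : Matrix (Fin m) (Fin m) ℝ) (hA : Aᵀ = A) (hC : Cᵀ = C)
    (hM : (Matrix.fromBlocks A B Bᵀ C).PosSemidef) :
    (Matrix.fromBlocks A B Bᵀ C).rank = C.rank + (A - B * pinv C * Bᵀ).rank := by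
  obtain ⟨⟨h1, h2, h3, h4⟩, hPt⟩ := pinv_spec hC
  have hBPC : B * pinv C * C = B :=
    cancel_of_ker (fun v hv => ker_contained hM v hv) h1
  have hCPBt : C * pinv C * Bᵀ = Bᵀ := by
    have := congrArg Matrix.transpose hBPC
    rwa [transpose_mul, transpose_mul, hC, hPt, ← Matrix.mul_assoc] at this
  set S : Matrix (Fin n) (Fin n) ℝ := A - B * pinv C * Bᵀ with hS
  set Q : Matrix (Fin n ⊕ Fin m) (Fin n ⊕ Fin m) ℝ :=
    Matrix.fromBlocks 1 (B * pinv C) 0 1 with hQ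
  have hQt : Qᵀ = Matrix.fromBlocks 1 0 (pinv C * Bᵀ) 1 := by
    rw [hQ, fromBlocks_transpose, transpose_one, transpose_one, transpose_zero,
      transpose_mul, hPt]
  have step1 : Q * Matrix.fromBlocks S 0 0 C = Matrix.fromBlocks S B 0 C := by
    rw [hQ, fromBlocks_multiply]
    simp only [Matrix.one_mul, Matrix.mul_zero, Matrix.zero_mul, Matrix.mul_one,
      add_zero, zero_add, hBPC]
  have step2 : Matrix.fromBlocks S B 0 C * Qᵀ = Matrix.fromBlocks A B Bᵀ C := by
    rw [hQt, fromBlocks_multiply]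
    simp only [Matrix.one_mul, Matrix.mul_zero, Matrix.zero_mul, Matrix.mul_one,
      add_zero, zero_add]
    rw [← Matrix.mul_assoc B (pinv C) Bᵀ, ← Matrix.mul_assoc C (pinv C) Bᵀ, hCPBt]
    rw [hS, sub_add_cancel]
  have hfact : Matrix.fromBlocks A B Bᵀ C = Q * (Matrix.fromBlocks S 0 0 C * Qᵀ) := by
    rw [← Matrix.mul_assoc, step1, step2]
  have hdetQ : IsUnit Q.det := by
    rw [hQ, det_fromBlocks_zero₂₁, det_one, det_one, one_mul]
    exact isUnit_one
  have hdetQt : IsUnit Qᵀ.det := by rw [det_transpose]; exact hdetQ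
  rw [hfact, rank_mul_eq_right_of_isUnit_det Q _ hdetQ,
    rank_mul_eq_left_of_isUnit_det Qᵀ _ hdetQt, rank_fromBlocks_diag, add_comm]
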